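/- With independent components per worker, E[‖(1/N)∑ₙ cₙ(1ₙ ⊙ yₙ)‖²] = (1/N²)∑ₙ (cₙ − 1)‖yₙ‖² + ‖g‖², where g = (1/N)∑ₙ yₙ. -/

import Mathlib

open MeasureTheory ProbabilityTheory Finset

/-- Coordinatewise (Hadamard) product on `ℝ^d`. -/
noncomputable def hadamard {d : ℕ} (a b : EuclideanSpace ℝ (Fin d)) :
    EuclideanSpace ℝ (Fin d) := WithLp.toLp 2 (fun i => a i * b i)

lemma norm_sq_eucl {d : ℕ} (x : EuclideanSpace ℝ (Fin d)) : ‖x‖ ^ 2 = ∑ i, (x i) ^ 2 := by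
  rw [EuclideanSpace.norm_eq, Real.sq_sqrt (by positivity)]
  simp [sq_abs]

lemma integral_boolean {Ω : Type*} [MeasurableSpace Ω] (μ : Measure Ω)
    (f : Ω → ℝ) (hf : Measurable f) (h01 : ∀ ω, f ω = 0 ∨ f ω = 1) :
    ∫ ω, f ω ∂μ = (μ {ω | f ω = 1}).toReal := by
  have hfe : f = Set.indicator {ω | f ω = 1} (fun _ => (1:ℝ)) := by
    funext ω
    rcases h01 ω with h | h <;> simp [Set.indicator, h]
  have hms : MeasurableSet {ω | f ω = 1} := hf (measurableSet_singleton 1)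
  conv_lhs => rw [hfe]
  rw [integral_indicator hms]
  simp [measureReal_def]

lemma eucl_sum_apply {d : ℕ} {ι : Type*} (s : Finset ι)
    (f : ι → EuclideanSpace ℝ (Fin d)) (i : Fin d) :
    (∑ n ∈ s, f n) i = ∑ n ∈ s, f n i := by rw [WithLp.ofLp_sum, Finset.sum_apply]

lemma integrable_bdd {Ω : Type*} [MeasurableSpace Ω] (μ : Measure Ω) [IsFiniteMeasure μ]
    (f : Ω → ℝ) (hf : Measurable f) (C : ℝ) (hb : ∀ ω, |f ω| ≤ C) : Integrable f μ :=
  (integrable_const C).mono' hf.aestronglyMeasurable (ae_of_all _ fun ω => by simpa using hb ω)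

/-- With independent Bernoulli entries `1ₙ[i]` of success probability `1/cₙ`
(`cₙ ≥ 1`), and fixed vectors `yₙ`,
`E[‖(1/N) ∑ₙ cₙ (1ₙ ⊙ yₙ)‖²] = (1/N²) ∑ₙ (cₙ − 1)‖yₙ‖² + ‖g‖²` where
`g = (1/N) ∑ₙ yₙ`. -/
theorem masked_gradient_second_moment
    {Ω : Type*} [MeasurableSpace Ω] (μ : Measure Ω) [IsProbabilityMeasure μ]
    (N d : ℕ) (hN : 0 < N)
    (y : Fin N → EuclideanSpace ℝ (Fin d))
    (B : Fin N → Ω → EuclideanSpace ℝ (Fin d))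
    (c : Fin N → ℝ) (hc : ∀ n, 1 ≤ c n)
    (hBmeas : ∀ n, Measurable (B n))
    (hB01 : ∀ n ω i, B n ω i = 0 ∨ B n ω i = 1)
    (hBernoulli : ∀ n i, μ {ω | B n ω i = 1} = ENNReal.ofReal (c n)⁻¹)
    (hindep : iIndepFun
      (fun p : Fin N × Fin d => fun ω => B p.1 ω p.2) μ)
    (g : EuclideanSpace ℝ (Fin d)) (hg : g = (N : ℝ)⁻¹ • ∑ n, y n) :
    (∫ ω, ‖(N : ℝ)⁻¹ • ∑ n, c n • hadamard (B n ω) (y n)‖ ^ 2 ∂μ)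
      = ((N : ℝ) ^ 2)⁻¹ * ∑ n, (c n - 1) * ‖y n‖ ^ 2 + ‖g‖ ^ 2 := by
  have hc0 : ∀ n, c n ≠ 0 := fun n => by linarith [hc n]
  -- measurability and bounds for the entries
  have hBm : ∀ n i, Measurable (fun ω => B n ω i) :=
    fun n i => (measurable_pi_apply i).comp ((WithLp.measurable_ofLp 2 _).comp (hBmeas n))
  have hBb : ∀ n i ω, |B n ω i| ≤ 1 := by
    intro n i ω
    rcases hB01 n ω i with h | h <;> simp [h]
  -- expectation of a single entry
  have hEB : ∀ n i, ∫ ω, B n ω i ∂μ = (c n)⁻¹ := by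
    intro n i
    rw [integral_boolean μ _ (hBm n i) (fun ω => hB01 n ω i), hBernoulli n i,
      ENNReal.toReal_ofReal (inv_nonneg.mpr (by linarith [hc n]))]
  -- integrability of pair products
  have hint : ∀ (n m : Fin N) (i : Fin d),
      Integrable (fun ω => (c n * (B n ω i * y n i)) * (c m * (B m ω i * y m i))) μ := by
    intro n m i
    refine integrable_bdd μ _ (by fun_prop)
      ((|c n| * |y n i|) * (|c m| * |y m i|)) fun ω => ?_
    have h1 := hBb n i ω
    have h2 := hBb m i ω
    calc |(c n * (B n ω i * y n i)) * (c m * (B m ω i * y m i))|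
        = (|c n| * |y n i| * |B n ω i|) * (|c m| * |y m i| * |B m ω i|) := by
          simp only [abs_mul]; ring
      _ ≤ (|c n| * |y n i| * 1) * (|c m| * |y m i| * 1) := by gcongr
      _ = (|c n| * |y n i|) * (|c m| * |y m i|) := by ring
  -- value of the pair expectations
  have hval : ∀ (n m : Fin N) (i : Fin d),
      (∫ ω, (c n * (B n ω i * y n i)) * (c m * (B m ω i * y m i)) ∂μ)
        = if n = m then c n * (y n i) ^ 2 else y n i * y m i := by
    intro n m i
    have hre : (fun ω => (c n * (B n ω i * y n i)) * (c m * (B m ω i * y m i)))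
        = fun ω => ((c n * y n i) * (c m * y m i)) * (B n ω i * B m ω i) := by
      funext ω; ring
    rw [hre, integral_const_mul]
    by_cases hnm : n = m
    · subst hnm
      have hBB : (fun ω => B n ω i * B n ω i) = fun ω => B n ω i := by
        funext ω; rcases hB01 n ω i with h | h <;> simp [h]
      rw [hBB, hEB n i, if_pos rfl]
      field_simp [hc0 n]
    · have hne : ((n, i) : Fin N × Fin d) ≠ (m, i) := by
        simp [Prod.ext_iff, hnm]
      have hI : IndepFun (fun ω => B n ω i) (fun ω => B m ω i) μ :=
        hindep.indepFun hne
      have hmul : ∫ ω, B n ω i * B m ω i ∂μ = (c n)⁻¹ * (c m)⁻¹ := by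
        have h := hI.integral_mul_eq_mul_integral
          (integrable_bdd μ _ (hBm n i) 1 (hBb n i)).aestronglyMeasurable
          (integrable_bdd μ _ (hBm m i) 1 (hBb m i)).aestronglyMeasurable
        simpa [Pi.mul_apply, hEB n i, hEB m i] using h
      rw [hmul, if_neg hnm]
      field_simp [hc0 n, hc0 m]
  -- pointwise rewriting of the norm
  have hpt : ∀ ω, ‖(N : ℝ)⁻¹ • ∑ n, c n • hadamard (B n ω) (y n)‖ ^ 2
      = ((N : ℝ) ^ 2)⁻¹ * ∑ i, ∑ n, ∑ m,
          (c n * (B n ω i * y n i)) * (c m * (B m ω i * y m i)) := by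
    intro ω
    rw [norm_smul, mul_pow, norm_sq_eucl]
    have happ : ∀ i : Fin d, (∑ n, c n • hadamard (B n ω) (y n)) i
        = ∑ n, c n * (B n ω i * y n i) := by
      intro i
      rw [eucl_sum_apply]
      refine Finset.sum_congr rfl fun n _ => ?_
      simp [hadamard, PiLp.smul_apply, smul_eq_mul]
    congr 1
    · rw [Real.norm_eq_abs, abs_of_nonneg (by positivity), ← inv_pow]
    · refine Finset.sum_congr rfl fun i _ => ?_
      rw [happ i, sq, Finset.sum_mul_sum]
  -- compute the integral
  rw [integral_congr_ae (ae_of_all _ hpt), integral_const_mul,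
    integral_finset_sum _ (fun i _ => integrable_finset_sum _
      (fun n _ => integrable_finset_sum _ (fun m _ => hint n m i)))]
  have hsums : ∀ i : Fin d,
      (∫ ω, ∑ n, ∑ m, (c n * (B n ω i * y n i)) * (c m * (B m ω i * y m i)) ∂μ)
        = ∑ n, (c n - 1) * (y n i) ^ 2 + (∑ n, y n i) ^ 2 := by
    intro i
    rw [integral_finset_sum _ (fun n _ => integrable_finset_sum _ (fun m _ => hint n m i))]
    have : ∀ n : Fin N,
        (∫ ω, ∑ m, (c n * (B n ω i * y n i)) * (c m * (B m ω i * y m i)) ∂μ)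
          = ∑ m, if n = m then c n * (y n i) ^ 2 else y n i * y m i := by
      intro n
      rw [integral_finset_sum _ (fun m _ => hint n m i)]
      exact Finset.sum_congr rfl fun m _ => hval n m i
    rw [Finset.sum_congr rfl fun n _ => this n]
    have hsplit : ∀ n : Fin N,
        (∑ m, if n = m then c n * (y n i) ^ 2 else y n i * y m i)
          = (c n - 1) * (y n i) ^ 2 + ∑ m, y n i * y m i := by
      intro n
      have : (∑ m, if n = m then c n * (y n i) ^ 2 else y n i * y m i)
          = ∑ m, ((if n = m then (c n - 1) * (y n i) ^ 2 else 0) + y n i * y m i) := by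
        refine Finset.sum_congr rfl fun m _ => ?_
        by_cases h : n = m
        · subst h; simp; ring
        · simp [h]
      rw [this, Finset.sum_add_distrib, Finset.sum_ite_eq _ n
        (fun _ => (c n - 1) * (y n i) ^ 2)]
      simp
    rw [Finset.sum_congr rfl fun n _ => hsplit n, Finset.sum_add_distrib]
    congr 1
    rw [sq, Finset.sum_mul_sum]
  have h1 : ∑ i, ∑ n, (c n - 1) * (y n i) ^ 2 = ∑ n, (c n - 1) * ‖y n‖ ^ 2 := by
    rw [Finset.sum_comm]
    exact Finset.sum_congr rfl fun n _ => by rw [norm_sq_eucl, Finset.mul_sum]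
  have h2 : ‖g‖ ^ 2 = ((N : ℝ) ^ 2)⁻¹ * ∑ i, (∑ n, y n i) ^ 2 := by
    rw [hg, norm_smul, mul_pow, norm_sq_eucl, Real.norm_eq_abs,
      abs_of_nonneg (by positivity), inv_pow]
    congr 1
    exact Finset.sum_congr rfl fun i _ => by rw [eucl_sum_apply]
  rw [Finset.sum_congr rfl fun i _ => hsums i, Finset.sum_add_distrib, mul_add, h1, h2]
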